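/- Let N ≥ 2 and define S(Y) := ∑_{m=1}^∞ (1/m²)·|∑_{j=1}^N e^{i m y_j}|² for a configuration Y of N distinct points 0 ≤ y₁ < ⋯ < y_N < 2π. Then S(Y) ≥ S(Ỹ), where Ỹ is the equidistant configuration ỹ_j = π(2j−1)/N, with equality if and only if all N cyclic gaps of Y equal 2π/N. -/

import Mathlib

open Real

/-- Periodic extension of a configuration `y` on the loop of circumference `2π`. -/
noncomputable def periodicExt {N : ℕ} (y : Fin N → ℝ) (k : ℕ) : ℝ :=
  if h : 0 < N then y ⟨k % N, Nat.mod_lt k h⟩ + 2 * Real.pi * (k / N : ℕ) else 0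

/-- The `j`-th cyclic gap of the configuration `y` on the loop of circumference `2π`. -/
noncomputable def cyclicGap {N : ℕ} (y : Fin N → ℝ) (j : Fin N) : ℝ :=
  periodicExt y ((j : ℕ) + 1) - periodicExt y (j : ℕ)

/-- A configuration is congruent to the equidistant one iff all cyclic gaps are `2π/N`. -/
def isEquidistant {N : ℕ} (y : Fin N → ℝ) : Prop :=
  ∀ j : Fin N, cyclicGap y j = 2 * Real.pi / N

/-- The quantity `S(Y) = ∑_{m=1}^∞ (1/m²)·|∑_{j=1}^N e^{i m y_j}|²` determining the
second-order weak-coupling coefficient of the ground-state energy. -/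
noncomputable def weakCouplingSum (N : ℕ) (y : Fin N → ℝ) : ℝ :=
  ∑' m : ℕ, (1 / ((m : ℝ) + 1) ^ 2) *
    ‖∑ j, Complex.exp (Complex.I * ((m + 1 : ℕ) : ℂ) * (y j : ℂ))‖ ^ 2

/-- The equidistant configuration `ỹ_j = π(2j−1)/N`, `j = 1, …, N`. -/
noncomputable def equidistantConfig (N : ℕ) : Fin N → ℝ :=
  fun j => Real.pi * (2 * (j : ℕ) + 1) / N

/-! ### Auxiliary material -/

noncomputable def wcsF (θ : ℝ) : ℝ := Real.pi^2/6 - Real.pi*θ/2 + θ^2/4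

noncomputable def wcsD {N : ℕ} (y : Fin N → ℝ) (j k : Fin N) : ℝ :=
  if j ≤ k then y k - y j else y k - y j + 2*Real.pi

lemma wcs_hasSum {θ : ℝ} (h0 : 0 ≤ θ) (h2 : θ ≤ 2*Real.pi) :
    HasSum (fun m : ℕ => 1/((m:ℝ)+1)^2 * Real.cos (((m:ℝ)+1)*θ)) (wcsF θ) := by
  have hpi : (0:ℝ) < 2*Real.pi := by positivity
  have hx : θ/(2*Real.pi) ∈ Set.Icc (0:ℝ) 1 := ⟨div_nonneg h0 hpi.le, (div_le_one hpi).2 h2⟩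
  have H := hasSum_one_div_nat_pow_mul_cos (k := 1) one_ne_zero hx
  have hber : (bernoulli 2 : ℚ) = 1/6 := by
    rw [bernoulli_eq_bernoulli'_of_ne_one (by norm_num), bernoulli'_two]
  have hb : (Polynomial.map (algebraMap ℚ ℝ) (Polynomial.bernoulli (2*1))).eval (θ/(2*Real.pi))
      = (θ/(2*Real.pi))^2 - (θ/(2*Real.pi)) + 1/6 := by
    simp [Polynomial.bernoulli, Finset.sum_range_succ, bernoulli_zero, bernoulli_one, hber]
    ring
  rw [hb] at H
  have Hval : ((-1:ℝ))^(1+1) * (2*Real.pi)^(2*1)/2/((2*1).factorial : ℝ) *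
      ((θ/(2*Real.pi))^2 - (θ/(2*Real.pi)) + 1/6) = wcsF θ := by
    have hpi' : Real.pi ≠ 0 := Real.pi_ne_zero
    simp only [Nat.factorial, wcsF]
    field_simp
    ring
  rw [Hval] at H
  have H2 : HasSum (fun n : ℕ => 1/(((n+1:ℕ)):ℝ)^(2*1) *
      Real.cos (2*Real.pi*((n+1:ℕ):ℝ)*(θ/(2*Real.pi)))) (wcsF θ) := by
    rw [hasSum_nat_add_iff (f := fun n : ℕ => 1/(n:ℝ)^(2*1) * Real.cos (2*Real.pi*(n:ℝ)*(θ/(2*Real.pi)))) 1]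
    simpa using H
  convert H2 using 2 with m
  push_cast
  congr 2
  field_simp

lemma abs_sq_exp_sum {N : ℕ} (y : Fin N → ℝ) (c : ℝ) :
    ‖∑ j, Complex.exp (Complex.I * (c:ℂ) * (y j : ℂ))‖^2
      = ∑ j, ∑ k, Real.cos (c*(y j - y k)) := by
  set z := ∑ j, Complex.exp (Complex.I * (c:ℂ) * (y j : ℂ)) with hz
  have h1 : ‖z‖ ^ 2 = (z * (starRingEnd ℂ) z).re := by
    rw [Complex.mul_conj, Complex.sq_norm]
    simp
  have h2 : z * (starRingEnd ℂ) z
      = ∑ j, ∑ k, Complex.exp (Complex.I * (c:ℂ) * ((y j : ℂ) - (y k : ℂ))) := by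
    rw [hz, map_sum, Finset.sum_mul_sum]
    refine Finset.sum_congr rfl fun j _ => Finset.sum_congr rfl fun k _ => ?_
    rw [← Complex.exp_conj, ← Complex.exp_add]
    congr 1
    simp only [map_mul, Complex.conj_I, Complex.conj_ofReal]
    ring
  rw [h1, h2, Complex.re_sum]
  refine Finset.sum_congr rfl fun j _ => ?_
  rw [Complex.re_sum]
  refine Finset.sum_congr rfl fun k _ => ?_
  have : Complex.I * (c:ℂ) * ((y j : ℂ) - (y k : ℂ)) = ((c*(y j - y k) : ℝ) : ℂ) * Complex.I := by
    push_cast; ring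
  rw [this, Complex.exp_ofReal_mul_I_re]

lemma myHasSum_sum {ι : Type*} (s : Finset ι) (f : ι → ℕ → ℝ) (a : ι → ℝ)
    (h : ∀ i ∈ s, HasSum (f i) (a i)) :
    HasSum (fun n => ∑ i ∈ s, f i n) (∑ i ∈ s, a i) := by
  classical
  induction s using Finset.induction_on with
  | empty => simpa using hasSum_zero
  | insert _ _ hnot ih =>
    rename_i b t
    simp only [Finset.sum_insert hnot]
    exact (h b (Finset.mem_insert_self b t)).add
      (ih fun i hi => h i (Finset.mem_insert_of_mem hi))

lemma wcs_eq {N : ℕ} (y : Fin N → ℝ) (hmono : Monotone y)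
    (hmem : ∀ j, y j ∈ Set.Ico 0 (2*Real.pi)) :
    weakCouplingSum N y = ∑ j, ∑ k, wcsF (wcsD y j k) := by
  have hD : ∀ j k : Fin N, 0 ≤ wcsD y j k ∧ wcsD y j k ≤ 2*Real.pi := by
    intro j k
    unfold wcsD
    rcases hmem j with ⟨hj0, hj2⟩
    rcases hmem k with ⟨hk0, hk2⟩
    split_ifs with h
    · exact ⟨sub_nonneg.2 (hmono h), by linarith⟩
    · have : k ≤ j := le_of_not_ge h
      have := hmono this
      constructor <;> linarith
  have hpair : ∀ j k : Fin N,
      HasSum (fun m : ℕ => 1/((m:ℝ)+1)^2 * Real.cos (((m:ℝ)+1) * wcsD y j k)) (wcsF (wcsD y j k)) :=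
    fun j k => wcs_hasSum (hD j k).1 (hD j k).2
  have H : HasSum (fun m : ℕ => ∑ j, ∑ k, 1/((m:ℝ)+1)^2 * Real.cos (((m:ℝ)+1) * wcsD y j k))
      (∑ j, ∑ k, wcsF (wcsD y j k)) :=
    myHasSum_sum _ _ _ (fun j _ => myHasSum_sum _ _ _ (fun k _ => hpair j k))
  have hfun : ∀ m : ℕ, (1 / ((m : ℝ) + 1) ^ 2) *
      ‖∑ j, Complex.exp (Complex.I * ((m + 1 : ℕ) : ℂ) * (y j : ℂ))‖ ^ 2
      = ∑ j, ∑ k, 1/((m:ℝ)+1)^2 * Real.cos (((m:ℝ)+1) * wcsD y j k) := by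
    intro m
    have hc : ((m + 1 : ℕ) : ℂ) = ((((m:ℝ)+1 : ℝ)) : ℂ) := by push_cast; ring
    rw [hc, abs_sq_exp_sum y ((m:ℝ)+1), Finset.mul_sum]
    refine Finset.sum_congr rfl fun j _ => ?_
    rw [Finset.mul_sum]
    refine Finset.sum_congr rfl fun k _ => ?_
    congr 1
    rw [show ((m:ℝ)+1)*(y j - y k) = -(((m:ℝ)+1)*(y k - y j)) by ring, Real.cos_neg]
    unfold wcsD
    split
    · rfl
    · rw [show ((m:ℝ)+1)*(y k - y j + 2*Real.pi)
          = ((m:ℝ)+1)*(y k - y j) + ((m+1:ℕ):ℝ)*(2*Real.pi) by push_cast; ring,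
        Real.cos_add_nat_mul_two_pi]
  rw [weakCouplingSum, tsum_congr hfun]
  exact H.tsum_eq

lemma sum_pairs {N : ℕ} [NeZero N] (F : Fin N → Fin N → ℝ) :
    ∑ j, ∑ k, F j k = ∑ l, ∑ j, F j (j + l) := by
  calc ∑ j, ∑ k, F j k = ∑ j, ∑ l, F j (j + l) :=
        Finset.sum_congr rfl fun j _ =>
          (Fintype.sum_equiv (Equiv.addLeft j) (fun l => F j (j + l)) (fun k => F j k)
            fun l => rfl).symm
    _ = ∑ l, ∑ j, F j (j + l) := Finset.sum_comm

lemma val_add_cases {N : ℕ} [NeZero N] (j l : Fin N) :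
    (j.val + l.val < N ∧ ((j+l : Fin N) : ℕ) = j.val + l.val) ∨
    (N ≤ j.val + l.val ∧ ((j+l : Fin N) : ℕ) = j.val + l.val - N) := by
  have hj := j.isLt
  have hl := l.isLt
  rw [Fin.val_add]
  by_cases h : j.val + l.val < N
  · exact Or.inl ⟨h, Nat.mod_eq_of_lt h⟩
  · refine Or.inr ⟨by omega, ?_⟩
    rw [Nat.mod_eq_sub_mod (by omega), Nat.mod_eq_of_lt (by omega)]

lemma wcsD_lag_sum {N : ℕ} [NeZero N] (y : Fin N → ℝ) (l : Fin N) :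
    ∑ j, wcsD y j (j + l) = 2*Real.pi*l.val := by
  have h1 : ∀ j : Fin N, wcsD y j (j + l)
      = (y (j+l) - y j) + (if N ≤ j.val + l.val then 2*Real.pi else 0) := by
    intro j
    unfold wcsD
    rcases val_add_cases j l with ⟨h, hv⟩ | ⟨h, hv⟩
    · rw [if_pos (by rw [Fin.le_def, hv]; omega), if_neg (by omega)]
      ring
    · rw [if_neg (by rw [Fin.le_def, hv]; push_neg; omega), if_pos h]
  rw [Finset.sum_congr rfl (fun j _ => h1 j), Finset.sum_add_distrib]
  have h2 : ∑ j : Fin N, (y (j + l) - y j) = 0 := by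
    rw [Finset.sum_sub_distrib, sub_eq_zero]
    exact Fintype.sum_equiv (Equiv.addRight l) _ _ (fun j => rfl)
  rw [h2, zero_add]
  have h3 : ∑ j : Fin N, (if N ≤ j.val + l.val then (2*Real.pi:ℝ) else 0)
      = ∑ i ∈ Finset.range N, (if N ≤ i + l.val then (2*Real.pi:ℝ) else 0) :=
    Fin.sum_univ_eq_sum_range (fun i => if N ≤ i + l.val then (2*Real.pi:ℝ) else 0) N
  rw [h3, Finset.range_eq_Ico,
    ← Finset.sum_Ico_consecutive _ (Nat.zero_le (N - l.val)) (Nat.sub_le N l.val)]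
  have hA : ∑ i ∈ Finset.Ico 0 (N - l.val), (if N ≤ i + l.val then (2*Real.pi:ℝ) else 0) = 0 := by
    refine Finset.sum_eq_zero fun i hi => ?_
    rw [Finset.mem_Ico] at hi
    rw [if_neg (by omega)]
  have hB : ∑ i ∈ Finset.Ico (N - l.val) N, (if N ≤ i + l.val then (2*Real.pi:ℝ) else 0)
      = l.val * (2*Real.pi) := by
    rw [Finset.sum_congr rfl (fun i hi => if_pos (by rw [Finset.mem_Ico] at hi; omega)),
      Finset.sum_const, Nat.card_Ico]
    have hl := l.isLt
    have : N - (N - l.val) = l.val := by omega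
    rw [this, nsmul_eq_mul]
  rw [hA, hB, zero_add]
  ring

lemma lag_bound {N : ℕ} (x : Fin N → ℝ) (μ : ℝ) (hsum : ∑ j, x j = N * μ) :
    ∑ j, wcsF (x j) = N * wcsF μ + (1/4) * ∑ j, (x j - μ)^2 := by
  have h : ∀ j, wcsF (x j) = wcsF μ + (1/4)*(x j - μ)^2 + ((μ - Real.pi)/2) * (x j - μ) := by
    intro j; unfold wcsF; ring
  rw [Finset.sum_congr rfl fun j _ => h j, Finset.sum_add_distrib, Finset.sum_add_distrib,
    Finset.sum_const, ← Finset.mul_sum, ← Finset.mul_sum, Finset.sum_sub_distrib,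
    Finset.sum_const, hsum]
  simp only [Finset.card_univ, Fintype.card_fin, nsmul_eq_mul]
  ring

lemma wcsD_of_affine {N : ℕ} [NeZero N] (y : Fin N → ℝ) (c : ℝ)
    (hy : ∀ j : Fin N, y j = c + 2*Real.pi*j.val/N) (j l : Fin N) :
    wcsD y j (j+l) = 2*Real.pi*l.val/N := by
  have hN : 0 < N := Nat.pos_of_ne_zero (NeZero.ne N)
  have hN' : (N:ℝ) ≠ 0 := Nat.cast_ne_zero.2 (NeZero.ne N)
  rcases val_add_cases j l with ⟨h, hv⟩ | ⟨h, hv⟩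
  · rw [wcsD, if_pos (by rw [Fin.le_def, hv]; omega), hy, hy, hv]
    push_cast
    field_simp
    ring
  · have hl := l.isLt
    rw [wcsD, if_neg (by rw [Fin.le_def, hv]; push_neg; omega), hy, hy, hv]
    rw [Nat.cast_sub h]
    push_cast
    field_simp
    ring

lemma equi_mem {N : ℕ} (hN : 0 < N) (j : Fin N) :
    equidistantConfig N j ∈ Set.Ico 0 (2*Real.pi) := by
  have hj := j.isLt
  have hNr : (0:ℝ) < N := Nat.cast_pos.2 hN
  constructor
  · unfold equidistantConfig; positivity
  · unfold equidistantConfig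
    rw [div_lt_iff₀ hNr]
    have : (j:ℝ) + 1 ≤ N := by exact_mod_cast hj
    nlinarith [Real.pi_pos]

lemma equi_mono {N : ℕ} (hN : 0 < N) : Monotone (equidistantConfig N) := by
  intro j k hjk
  unfold equidistantConfig
  have hNr : (0:ℝ) < N := Nat.cast_pos.2 hN
  have : (j:ℝ) ≤ k := Nat.cast_le.2 hjk
  gcongr

lemma periodicExt_lt {N : ℕ} (hN : 0 < N) (y : Fin N → ℝ) (k : ℕ) (h : k < N) :
    periodicExt y k = y ⟨k, h⟩ := by
  unfold periodicExt
  rw [dif_pos hN]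
  simp [Nat.mod_eq_of_lt h, Nat.div_eq_of_lt h]

lemma cyclicGap_eq_wcsD {N : ℕ} [NeZero N] (hN2 : 2 ≤ N) (y : Fin N → ℝ) (j : Fin N) :
    cyclicGap y j = wcsD y j (j + 1) := by
  have hN : 0 < N := by omega
  have hone : ((1 : Fin N) : ℕ) = 1 := by
    rw [Fin.val_one']
    exact Nat.mod_eq_of_lt (by omega)
  unfold cyclicGap
  rcases Nat.lt_or_ge (j.val + 1) N with h | h
  · have h1 : ((j + 1 : Fin N) : ℕ) = j.val + 1 := by
      rw [Fin.val_add, hone]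
      exact Nat.mod_eq_of_lt h
    rw [periodicExt_lt hN y _ h, periodicExt_lt hN y j.val j.isLt]
    rw [wcsD, if_pos (by rw [Fin.le_def, h1]; omega)]
    have e1 : (j + 1 : Fin N) = ⟨j.val + 1, h⟩ := Fin.ext h1
    have e2 : (⟨j.val, j.isLt⟩ : Fin N) = j := Fin.ext rfl
    rw [e1, e2]
  · have hj : j.val = N - 1 := by have := j.isLt; omega
    have hjN : j.val + 1 = N := by omega
    have h1 : ((j + 1 : Fin N) : ℕ) = 0 := by
      rw [Fin.val_add, hone, hjN, Nat.mod_self]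
    have hP1 : periodicExt y (j.val + 1) = y ⟨0, hN⟩ + 2*Real.pi := by
      unfold periodicExt
      rw [dif_pos hN, hjN]
      simp [Nat.mod_self, Nat.div_self hN]
    have hP2 : periodicExt y j.val = y j :=
      (periodicExt_lt hN y j.val j.isLt).trans (congrArg y (Fin.ext rfl))
    rw [hP1, hP2, wcsD, if_neg (by rw [Fin.le_def, h1]; omega)]
    have : (j + 1 : Fin N) = ⟨0, hN⟩ := Fin.ext h1
    rw [this]
    ring

/-- For N ≥ 2 and a configuration Y of N distinct points
0 ≤ y₁ < ⋯ < y_N < 2π one has S(Y) ≥ S(Ỹ) for the equidistant configuration Ỹ,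
with equality if and only if all N cyclic gaps of Y equal 2π/N. -/
theorem weakCouplingSum_min (N : ℕ) (hN : 2 ≤ N) (y : Fin N → ℝ)
    (hmono : StrictMono y) (hmem : ∀ j, y j ∈ Set.Ico 0 (2 * Real.pi)) :
    weakCouplingSum N y ≥ weakCouplingSum N (equidistantConfig N) ∧
    (weakCouplingSum N y = weakCouplingSum N (equidistantConfig N) ↔ isEquidistant y) := by
  haveI : NeZero N := ⟨by omega⟩
  have hN0 : 0 < N := by omega
  have hN' : (N:ℝ) ≠ 0 := Nat.cast_ne_zero.2 (by omega)
  set μ : Fin N → ℝ := fun l => 2*Real.pi*l.val/N with hμ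
  have key : ∀ z : Fin N → ℝ, Monotone z → (∀ j, z j ∈ Set.Ico 0 (2*Real.pi)) →
      weakCouplingSum N z = (∑ l, (N:ℝ) * wcsF (μ l))
        + ∑ l : Fin N, (1/4) * ∑ j, (wcsD z j (j+l) - μ l)^2 := by
    intro z hzm hzmem
    rw [wcs_eq z hzm hzmem, sum_pairs (fun j k => wcsF (wcsD z j k)), ← Finset.sum_add_distrib]
    refine Finset.sum_congr rfl fun l _ => ?_
    exact lag_bound (fun j => wcsD z j (j+l)) (μ l)
      (by rw [wcsD_lag_sum z l, hμ]; field_simp)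
  have hy := key y hmono.monotone hmem
  have hDE : ∀ j l : Fin N, wcsD (equidistantConfig N) j (j+l) = μ l := by
    intro j l
    exact wcsD_of_affine (equidistantConfig N) (Real.pi/N)
      (fun j => by unfold equidistantConfig; push_cast; field_simp; ring) j l
  have hE : weakCouplingSum N (equidistantConfig N) = ∑ l, (N:ℝ) * wcsF (μ l) := by
    rw [key (equidistantConfig N) (equi_mono hN0) (equi_mem hN0)]
    simp [hDE]
  set R : ℝ := ∑ l : Fin N, (1/4) * ∑ j, (wcsD y j (j+l) - μ l)^2 with hR
  have hRnn : 0 ≤ R := by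
    apply Finset.sum_nonneg
    intro l _
    have : (0:ℝ) ≤ ∑ j, (wcsD y j (j+l) - μ l)^2 :=
      Finset.sum_nonneg fun j _ => sq_nonneg _
    linarith
  have hR0 : R = 0 ↔ ∀ l j : Fin N, wcsD y j (j+l) = μ l := by
    constructor
    · intro h0 l j
      have h1 := (Finset.sum_eq_zero_iff_of_nonneg (fun l _ => by
        have : (0:ℝ) ≤ ∑ j, (wcsD y j (j+l) - μ l)^2 :=
          Finset.sum_nonneg fun j _ => sq_nonneg _
        positivity)).1 h0 l (Finset.mem_univ l)
      have h2 : ∑ j, (wcsD y j (j+l) - μ l)^2 = 0 := by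
        have h14 : (1/4 : ℝ) ≠ 0 := by norm_num
        exact (mul_eq_zero.1 h1).resolve_left h14
      have h3 := (Finset.sum_eq_zero_iff_of_nonneg (fun j _ => sq_nonneg _)).1 h2 j
        (Finset.mem_univ j)
      have := sq_eq_zero_iff.1 h3
      linarith [this]
    · intro h
      apply Finset.sum_eq_zero
      intro l _
      rw [Finset.sum_eq_zero (fun j _ => by rw [h l j]; ring)]
      ring
  have hIff : (∀ l j : Fin N, wcsD y j (j+l) = μ l) ↔ isEquidistant y := by
    constructor
    · intro h j
      have hone : ((1 : Fin N) : ℕ) = 1 := by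
        rw [Fin.val_one']
        exact Nat.mod_eq_of_lt (by omega)
      rw [cyclicGap_eq_wcsD hN y j, h 1 j]
      simp only [hμ, hone]
      norm_num
    · intro h l j
      -- first : y is affine
      have haff : ∀ n : ℕ, ∀ hn : n < N, y ⟨n, hn⟩ = y ⟨0, hN0⟩ + 2*Real.pi*n/N := by
        intro n
        induction n with
        | zero => intro hn; norm_num
        | succ n ih =>
          intro hn
          have hn' : n < N := by omega
          have hgap := h ⟨n, hn'⟩
          rw [cyclicGap] at hgap
          rw [periodicExt_lt hN0 y n hn'] at hgap
          rw [show ((⟨n, hn'⟩ : Fin N) : ℕ) + 1 = n + 1 from rfl] at hgap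
          rw [periodicExt_lt hN0 y (n+1) hn] at hgap
          have := ih hn'
          have heq : y ⟨n+1, hn⟩ = y ⟨n, hn'⟩ + 2*Real.pi/N := by
            linarith [hgap]
          rw [heq, this]
          field_simp
          push_cast; ring
      have haff' : ∀ j : Fin N, y j = y ⟨0, hN0⟩ + 2*Real.pi*j.val/N := by
        intro j
        have := haff j.val j.isLt
        simpa using this
      exact wcsD_of_affine y (y ⟨0, hN0⟩) haff' j l
  constructor
  · rw [hy, hE]; linarith
  · rw [hy, hE]
    constructor
    · intro heq
      exact hIff.1 (hR0.1 (by linarith))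
    · intro hEq
      have : R = 0 := hR0.2 (hIff.2 hEq)
      rw [this]
      ring
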